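/- Suppose n is a positive integer, k and f = f_k(n) satisfy 485·f ≤ 306·k, and T^m(n) ≥ 99781 for all 0 ≤ m ≤ k with k ≥ 1. Then T^k(n) < n. -/

import Mathlib

/-- The modified Collatz function. -/
def T (n : ℕ) : ℕ := if n % 2 = 0 then n / 2 else (3 * n + 1) / 2

/-- `f k m` is the number of indices `0 ≤ j < k` with `T^[j] m` odd. -/
def f (k m : ℕ) : ℕ := ((Finset.range k).filter (fun j => Odd (T^[j] m))).card

lemma f_succ (k m : ℕ) :
    f (k+1) m = f k m + if Odd (T^[k] m) then 1 else 0 := by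
  rw [f, Finset.range_add_one, Finset.filter_insert]
  split_ifs with h
  · rw [Finset.card_insert_of_notMem (by simp)]; rfl
  · simp [f]

lemma big : (3*99781+1)^306 < 99781^306 * 2^485 := by decide

lemma key (F k : ℕ) (hf : 485 * F ≤ 306 * k) (hk : 1 ≤ k) :
    (3*99781+1)^F < 99781^F * 2^k := by
  rcases Nat.eq_zero_or_pos F with rfl | hF
  · simpa using Nat.one_lt_two_pow_iff.2 (by omega)
  · have h1 : ((3*99781+1)^F)^(485*306) < (99781^F * 2^k)^(485*306) := by
      have e1 : ((3*99781+1)^F)^(485*306) = ((3*99781+1)^306)^(485*F) := by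
        rw [← pow_mul, ← pow_mul]; ring_nf
      have e2 : (99781^F * 2^k)^(485*306) = 99781^(306*(485*F)) * 2^(485*(306*k)) := by
        rw [mul_pow, ← pow_mul, ← pow_mul]; ring_nf
      rw [e1, e2]
      calc ((3*99781+1)^306)^(485*F) < (99781^306 * 2^485)^(485*F) :=
            Nat.pow_lt_pow_left big (by positivity)
        _ = 99781^(306*(485*F)) * 2^(485*(485*F)) := by
            rw [mul_pow, ← pow_mul, ← pow_mul]
        _ ≤ 99781^(306*(485*F)) * 2^(485*(306*k)) := by
            exact Nat.mul_le_mul_left _ (Nat.pow_le_pow_right (by norm_num) (by omega))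
    exact lt_of_pow_lt_pow_left₀ _ (by positivity) h1

lemma prod_bound (n k : ℕ) (hbig : ∀ m < k, 99781 ≤ T^[m] n) :
    2^k * 99781^(f k n) * T^[k] n ≤ (3*99781+1)^(f k n) * n := by
  induction k with
  | zero => simp [f]
  | succ k ih =>
    have ih' := ih (fun m hm => hbig m (by omega))
    set m := T^[k] n with hm
    have hmN : 99781 ≤ m := hbig k (by omega)
    have hit : T^[k+1] n = T m := Function.iterate_succ_apply' T k n
    rw [f_succ, hit]
    by_cases hodd : Odd m
    · rw [if_pos hodd]
      obtain ⟨r, hr⟩ := hodd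
      have hT : T m = 3*r + 2 := by
        rw [T, if_neg (by omega)]
        omega
      have step : 2 * 99781 * T m ≤ (3*99781+1) * m := by
        rw [hT]; nlinarith
      calc 2^(k+1) * 99781^(f k n + 1) * T m
          = (2^k * 99781^(f k n)) * (2 * 99781 * T m) := by ring
        _ ≤ (2^k * 99781^(f k n)) * ((3*99781+1) * m) := by gcongr
        _ = (3*99781+1) * (2^k * 99781^(f k n) * m) := by ring
        _ ≤ (3*99781+1) * ((3*99781+1)^(f k n) * n) := by gcongr
        _ = (3*99781+1)^(f k n + 1) * n := by ring
    · rw [if_neg hodd]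
      have heven : m % 2 = 0 := Nat.even_iff.1 (Nat.not_odd_iff_even.1 hodd)
      have hT : 2 * T m = m := by
        rw [T, if_pos heven]; omega
      calc 2^(k+1) * 99781^(f k n) * T m
          = (2^k * 99781^(f k n)) * (2 * T m) := by ring
        _ = 2^k * 99781^(f k n) * m := by rw [hT]
        _ ≤ (3*99781+1)^(f k n) * n := ih'

theorem descent_from_rational_approx (n k : ℕ) (hn : 0 < n) (hk : 1 ≤ k)
    (hf : 485 * f k n ≤ 306 * k)
    (hbig : ∀ m ≤ k, 99781 ≤ T^[m] n) :
    T^[k] n < n := by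
  have h1 := prod_bound n k (fun m hm => hbig m (by omega))
  have h2 := key (f k n) k hf hk
  have h3 : 2^k * 99781^(f k n) * T^[k] n < 2^k * 99781^(f k n) * n := by
    calc 2^k * 99781^(f k n) * T^[k] n ≤ (3*99781+1)^(f k n) * n := h1
      _ < 99781^(f k n) * 2^k * n := by
          exact (Nat.mul_lt_mul_right hn).2 h2
      _ = 2^k * 99781^(f k n) * n := by ring
  exact lt_of_mul_lt_mul_left h3 (Nat.zero_le _)
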